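/- In the random-amplification β-encoder, for every n ≥ 1 one has 0 ≤ x − Σ_{i=1}^n b_i / (∏_{j=1}^i β_j) ≤ κ / β_min^n; consequently the series Σ_{i=1}^∞ b_i / (∏_{j=1}^i β_j) converges and equals x. -/

import Mathlib

open MeasureTheory Filter Set Real

/-- Orbit of the random-amplification β-encoder: `rIter βs u x n` is the iterate `x_n`,
where `x_0 = x` and `x_n = βs_n · x_{n-1} − b_n`. -/
noncomputable def rIter (βs u : ℕ → ℝ) (x : ℝ) : ℕ → ℝ
  | 0 => x
  | n + 1 =>
      if βs (n + 1) * rIter βs u x n < u (n + 1) then βs (n + 1) * rIter βs u x n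
      else βs (n + 1) * rIter βs u x n - 1

/-- The bit `b_n` produced by the random-amplification β-encoder at step `n ≥ 1`. -/
noncomputable def rBit (βs u : ℕ → ℝ) (x : ℝ) (n : ℕ) : ℝ :=
  if βs n * rIter βs u x (n - 1) < u n then 0 else 1

/-- in the random-amplification β-encoder, for every `n ≥ 1` one has
`0 ≤ x − Σ_{i=1}^n b_i / (∏_{j=1}^i β_j) ≤ κ / β_min^n`; consequently the series
`Σ_{i=1}^∞ b_i / (∏_{j=1}^i β_j)` converges and equals `x`. -/
theorem stmt_12 (βmin βmax : ℝ) (h1 : 1 < βmin) (h2 : βmin ≤ βmax) (h3 : βmax < 2)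
    (βs u : ℕ → ℝ)
    (hβs : ∀ n, 1 ≤ n → βs n ∈ Set.Icc βmin βmax)
    (hu : ∀ n, 1 ≤ n → u n ∈ Set.Icc (1:ℝ) (βmax - 1)⁻¹)
    (x : ℝ) (hx : x ∈ Set.Icc (0:ℝ) 1) :
    (∀ n : ℕ, 1 ≤ n →
      0 ≤ x - ∑ i ∈ Finset.Icc 1 n, rBit βs u x i / ∏ j ∈ Finset.Icc 1 i, βs j ∧
      x - ∑ i ∈ Finset.Icc 1 n, rBit βs u x i / ∏ j ∈ Finset.Icc 1 i, βs j
        ≤ (βmax - 1)⁻¹ / βmin ^ n) ∧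
    HasSum (fun n : ℕ => rBit βs u x (n + 1) / ∏ j ∈ Finset.Icc 1 (n + 1), βs j) x := by
  set κ : ℝ := (βmax - 1)⁻¹ with hκ
  set X : ℕ → ℝ := rIter βs u x with hX
  set b : ℕ → ℝ := rBit βs u x with hb
  set P : ℕ → ℝ := fun n => ∏ j ∈ Finset.Icc 1 n, βs j with hP
  have hβmax1 : (0:ℝ) < βmax - 1 := by linarith
  have hκ1 : 1 ≤ κ := by
    rw [hκ]
    exact (one_le_inv₀ hβmax1).mpr (by linarith)
  -- recursion
  have hrec : ∀ n, X (n + 1) = βs (n + 1) * X n - b (n + 1) := by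
    intro n
    simp only [hX, hb, rBit, rIter, Nat.add_sub_cancel]
    split <;> ring
  -- invariant
  have hinv : ∀ n, 0 ≤ X n ∧ X n ≤ κ := by
    intro n
    induction n with
    | zero => exact ⟨hx.1, le_trans hx.2 hκ1⟩
    | succ n ih =>
      have hβ := hβs (n + 1) (by omega)
      have hu' := hu (n + 1) (by omega)
      have hβ0 : 0 < βs (n + 1) := by have := hβ.1; linarith
      have hκmul : βmax * κ = κ + 1 := by
        rw [hκ]; field_simp; ring
      have hub : βs (n + 1) * X n ≤ κ + 1 := by
        calc βs (n + 1) * X n ≤ βmax * κ :=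
              mul_le_mul hβ.2 ih.2 ih.1 (by linarith)
          _ = κ + 1 := hκmul
      have hbval : b (n + 1) = if βs (n + 1) * X n < u (n + 1) then 0 else 1 := rfl
      rw [hrec n, hbval]
      by_cases h : βs (n + 1) * X n < u (n + 1)
      · rw [if_pos h]
        exact ⟨by have := mul_nonneg hβ0.le ih.1; linarith, by have := hu'.2; linarith⟩
      · rw [if_neg h]
        push_neg at h
        exact ⟨by have := hu'.1; linarith, by linarith⟩
  -- products
  have hP0 : P 0 = 1 := by simp [hP]
  have hPs : ∀ n, P (n + 1) = P n * βs (n + 1) := by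
    intro n
    simp only [hP]
    rw [Finset.prod_Icc_succ_top (by omega)]
  have hPpos : ∀ n, 0 < P n := by
    intro n
    induction n with
    | zero => simp [hP0]
    | succ n ih =>
      rw [hPs]
      have := (hβs (n + 1) (by omega)).1
      exact mul_pos ih (by linarith)
  have hPge : ∀ n, βmin ^ n ≤ P n := by
    intro n
    induction n with
    | zero => simp [hP0]
    | succ n ih =>
      rw [hPs, pow_succ]
      exact mul_le_mul ih (hβs (n + 1) (by omega)).1 (by linarith) (hPpos n).le
  -- telescoping
  have htel : ∀ n, x - ∑ i ∈ Finset.Icc 1 n, b i / P i = X n / P n := by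
    intro n
    induction n with
    | zero => simp [hP0, hX, rIter]
    | succ n ih =>
      rw [Finset.sum_Icc_succ_top (by omega : 1 ≤ n + 1)]
      have hβ0 : (0:ℝ) < βs (n + 1) := by have := (hβs (n + 1) (by omega)).1; linarith
      have : x - (∑ i ∈ Finset.Icc 1 n, b i / P i + b (n + 1) / P (n + 1))
          = X n / P n - b (n + 1) / P (n + 1) := by linarith
      rw [this, hrec n, hPs n]
      have hne1 := (hPpos n).ne'
      have hne2 := hβ0.ne'
      field_simp
  have hbounds : ∀ n : ℕ,
      0 ≤ x - ∑ i ∈ Finset.Icc 1 n, b i / P i ∧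
      x - ∑ i ∈ Finset.Icc 1 n, b i / P i ≤ κ / βmin ^ n := by
    intro n
    rw [htel n]
    constructor
    · exact div_nonneg (hinv n).1 (hPpos n).le
    · exact div_le_div₀ (by linarith) (hinv n).2 (pow_pos (by linarith) n) (hPge n)
  refine ⟨fun n _ => hbounds n, ?_⟩
  -- HasSum part
  have hbnn : ∀ i, 0 ≤ b (i + 1) / P (i + 1) := by
    intro i
    apply div_nonneg _ (hPpos (i + 1)).le
    simp only [hb, rBit]; split <;> norm_num
  rw [hasSum_iff_tendsto_nat_of_nonneg hbnn]
  have hsum : ∀ n : ℕ, ∑ i ∈ Finset.range n, b (i + 1) / P (i + 1)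
      = ∑ i ∈ Finset.Icc 1 n, b i / P i := by
    intro n
    induction n with
    | zero => simp
    | succ n ih =>
      rw [Finset.sum_range_succ, Finset.sum_Icc_succ_top (by omega : 1 ≤ n + 1), ih]
  have h0 : Tendsto (fun n : ℕ => x - ∑ i ∈ Finset.Icc 1 n, b i / P i) atTop (nhds 0) := by
    apply squeeze_zero (fun n => (hbounds n).1) (fun n => (hbounds n).2)
    have : Tendsto (fun n : ℕ => κ * (βmin⁻¹) ^ n) atTop (nhds (κ * 0)) := by
      apply Tendsto.const_mul
      apply tendsto_pow_atTop_nhds_zero_of_lt_one (by positivity)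
      rw [inv_lt_one_iff₀]; right; exact h1
    simpa [div_eq_mul_inv, inv_pow] using this
  have := (tendsto_const_nhds (x := x) (f := atTop (α := ℕ))).sub h0
  simp only [sub_sub_cancel, sub_zero] at this
  exact (funext hsum ▸ this : _)
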